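/- arXiv:2001.07894 — 2 statements merged into one kernel-verified Lean document; each statement's English description precedes it below -/
import Mathlib

section
/- For every n-vertex tree T and every integer k ≥ 0, n_k(S_n) ≥ n_k(T) ≥ n_k(P_n), i.e. the star maximizes and the path minimizes the number of k-vertex subtrees among trees of a fixed order. -/
open SimpleGraph

/-- A subtree of `G` is a nonempty connected acyclic subgraph of `G`. -/
def IsSubtree {V : Type*} {G : SimpleGraph V} (H : G.Subgraph) : Prop :=
  H.Connected ∧ H.coe.IsAcyclic

/-- `nk G k` : the number of subtrees of `G` with exactly `k` vertices. -/
noncomputable def nk {V : Type*} (G : SimpleGraph V) (k : ℕ) : ℕ :=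
  Nat.card {H : G.Subgraph // IsSubtree H ∧ H.verts.ncard = k}

/-- number of `k`-vertex subtrees of `G` containing the vertex `v`. -/
noncomputable def nkAt {V : Type*} (G : SimpleGraph V) (v : V) (k : ℕ) : ℕ :=
  Nat.card {H : G.Subgraph // IsSubtree H ∧ v ∈ H.verts ∧ H.verts.ncard = k}

/-- `nT G` : total number of subtrees of `G`, counting the empty subtree once. -/
noncomputable def nT {V : Type*} (G : SimpleGraph V) : ℕ :=
  1 + Nat.card {H : G.Subgraph // IsSubtree H}

/-- number of subtrees of `G` containing the vertex `v`. -/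
noncomputable def nAt {V : Type*} (G : SimpleGraph V) (v : V) : ℕ :=
  Nat.card {H : G.Subgraph // IsSubtree H ∧ v ∈ H.verts}

/-- the path on `n` vertices `0 - 1 - ⋯ - (n-1)`. -/
def pathG (n : ℕ) : SimpleGraph (Fin n) :=
  SimpleGraph.fromRel (fun u v => v.val = u.val + 1)

/-- the cycle on `n` vertices. -/
def cycG (n : ℕ) : SimpleGraph (Fin n) :=
  SimpleGraph.fromRel (fun u v => v.val = u.val + 1 ∨ (u.val = 0 ∧ v.val + 1 = n))

/-- the star on `n` vertices with center `0`. -/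
def starG (n : ℕ) : SimpleGraph (Fin n) :=
  SimpleGraph.fromRel (fun u _ => u.val = 0)

/-- `USnl n l` : the cycle `C_l` (on `0,…,l-1`) with `n - l` pendant vertices attached
to the vertex `0`. -/
def USnl (n l : ℕ) : SimpleGraph (Fin n) :=
  SimpleGraph.fromRel (fun u v =>
    (v.val = u.val + 1 ∧ v.val < l) ∨ (u.val = 0 ∧ v.val + 1 = l) ∨ (u.val = 0 ∧ l ≤ v.val))

/-- `UPnl n l` : the cycle `C_l` (on `0,…,l-1`) with a pendant path of length `n - l`
attached to the vertex `l-1`. -/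
def UPnl (n l : ℕ) : SimpleGraph (Fin n) :=
  SimpleGraph.fromRel (fun u v => v.val = u.val + 1 ∨ (u.val = 0 ∧ v.val + 1 = l))

/-- `US_n` : the star `S_n` together with an edge joining two of its leaves. -/
def USn (n : ℕ) : SimpleGraph (Fin n) := USnl n 3

/-- `UP_n` : a triangle with a pendant path, obtained by identifying a vertex of `C_3`
with an end of `P_{n-2}`. -/
def UPn (n : ℕ) : SimpleGraph (Fin n) := UPnl n 3

/-- the Merrifield–Simmons index: the number of independent vertex subsets
(including the empty set). -/
noncomputable def sigmaG {V : Type*} (G : SimpleGraph V) : ℕ :=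
  Nat.card {s : Set V // ∀ u ∈ s, ∀ v ∈ s, ¬ G.Adj u v}

/-- the Hosoya index: the number of matchings (including the empty one). -/
noncomputable def hosoya {V : Type*} (G : SimpleGraph V) : ℕ :=
  Nat.card {s : Set (Sym2 V) // s ⊆ G.edgeSet ∧
    s.Pairwise (fun e f => ∀ v, ¬(v ∈ e ∧ v ∈ f))}

/-- the Wiener index: the sum of the distances over all unordered pairs of vertices. -/
noncomputable def wiener {V : Type*} [Fintype V] (G : SimpleGraph V) : ℕ :=
  (∑ u : V, ∑ v : V, G.dist u v) / 2


section Aux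

open SimpleGraph

instance subgraphFinite {V : Type*} [Finite V] {G : SimpleGraph V} : Finite G.Subgraph := by
  classical
  have : Function.Injective (fun H : G.Subgraph => (H.verts, H.Adj)) := by
    intro H1 H2 h
    simp only [Prod.mk.injEq] at h
    exact Subgraph.ext h.1 h.2
  exact Finite.of_injective _ this

lemma coe_acyclic {V : Type*} {G : SimpleGraph V} (hG : G.IsAcyclic) (H : G.Subgraph) :
    H.coe.IsAcyclic := by
  intro v c hc
  exact hG (c.map H.hom) (hc.map Subgraph.hom_injective)

lemma nk_zero {n : ℕ} (G : SimpleGraph (Fin n)) : nk G 0 = 0 := by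
  rw [nk, Nat.card_eq_zero]
  left
  constructor
  rintro ⟨H, hH, hcard⟩
  obtain ⟨v, hv⟩ := hH.1.nonempty
  have : H.verts = ∅ := (Set.ncard_eq_zero (Set.toFinite H.verts)).mp hcard
  simp [this] at hv

lemma nk_gt {n k : ℕ} (G : SimpleGraph (Fin n)) (hk : n < k) : nk G k = 0 := by
  rw [nk, Nat.card_eq_zero]
  left
  constructor
  rintro ⟨H, hH, hcard⟩
  have h1 : H.verts.ncard ≤ (Set.univ : Set (Fin n)).ncard :=
    Set.ncard_le_ncard (Set.subset_univ _) Set.finite_univ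
  rw [hcard, Set.ncard_univ, Nat.card_eq_fintype_card, Fintype.card_fin] at h1
  omega

lemma nk_one {n : ℕ} (G : SimpleGraph (Fin n)) : nk G 1 = n := by
  have hbij : Function.Bijective
      (fun v : Fin n => (⟨G.singletonSubgraph v, by
        refine ⟨⟨Subgraph.singletonSubgraph_connected, ?_⟩, ?_⟩
        · intro u c hc
          cases c with
          | nil => exact hc.not_of_nil
          | cons h p => exact False.elim h
        · simp⟩ :
        {H : G.Subgraph // IsSubtree H ∧ H.verts.ncard = 1})) := by
    constructor
    · intro u v h
      have := congrArg (fun H => H.1.verts) h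
      simpa [SimpleGraph.singletonSubgraph] using this
    · rintro ⟨H, hH, hcard⟩
      obtain ⟨v, hv⟩ := Set.ncard_eq_one.mp hcard
      refine ⟨v, ?_⟩
      ext1
      refine (Subgraph.ext ?_ ?_).symm
      · simp [hv, SimpleGraph.singletonSubgraph]
      · ext a b
        simp only [SimpleGraph.singletonSubgraph]
        constructor
        · intro h
          have ha : a ∈ H.verts := H.edge_vert h
          have hb : b ∈ H.verts := H.edge_vert h.symm
          rw [hv] at ha hb
          simp only [Set.mem_singleton_iff] at ha hb
          subst ha; subst hb
          exact absurd (H.adj_sub h) (G.loopless.irrefl _)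
        · intro h
          exact h.elim
  rw [nk, ← Nat.card_eq_of_bijective _ hbij, Nat.card_eq_fintype_card, Fintype.card_fin]


lemma walk_cross {W : Type*} {Gc : SimpleGraph W} (p : W → Prop) :
    ∀ {u v : W} (w : Gc.Walk u v), p u → ¬ p v → ∃ a b, Gc.Adj a b ∧ p a ∧ ¬ p b := by
  intro u v w
  induction w with
  | nil => intro h1 h2; exact absurd h1 h2
  | @cons u c v h w ih =>
    intro h1 h2
    by_cases hm : p c
    · exact ih hm h2
    · exact ⟨u, c, h, h1, hm⟩

lemma closed_walk_support_not_nodup {W : Type*} {Gc : SimpleGraph W} {u : W}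
    (w : Gc.Walk u u) (hw : ¬ w.Nil) : ¬ w.support.Nodup := by
  cases w with
  | nil => simp at hw
  | cons h p =>
    intro hnd
    rw [SimpleGraph.Walk.support_cons] at hnd
    exact (List.nodup_cons.mp hnd).1 p.end_mem_support

lemma pathG_adj {n : ℕ} {u v : Fin n} :
    (pathG n).Adj u v ↔ u ≠ v ∧ (v.val = u.val + 1 ∨ u.val = v.val + 1) := by
  simp [pathG, SimpleGraph.fromRel_adj]

lemma starG_adj {n : ℕ} {u v : Fin n} :
    (starG n).Adj u v ↔ u ≠ v ∧ (u.val = 0 ∨ v.val = 0) := by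
  simp [starG, SimpleGraph.fromRel_adj]

lemma path_no_cycle_at_max {n : ℕ} {m : Fin n} (d : (pathG n).Walk m m) (hd : d.IsCycle)
    (hmem : ∀ x ∈ d.support, x.val ≤ m.val) : False := by
  cases d with
  | nil => simpa using hd.three_le_length
  | @cons _ a _ h p =>
    have ha := pathG_adj.mp h
    have haval : m.val = a.val + 1 := by
      have h2 := hmem a (by simp)
      rcases ha.2 with h1 | h1
      · omega
      · exact h1
    have hma : m ≠ a := fun hh => by rw [hh] at haval; omega
    obtain ⟨b, h', r, hrb⟩ := SimpleGraph.Walk.exists_eq_cons_of_ne hma p.reverse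
    have hb := pathG_adj.mp h'
    have hbsup : b ∈ p.support := by
      have : b ∈ p.reverse.support := by rw [hrb]; simp
      rwa [SimpleGraph.Walk.support_reverse, List.mem_reverse] at this
    have hbval : m.val = b.val + 1 := by
      have h2 := hmem b (by simp [hbsup])
      rcases hb.2 with h1 | h1
      · omega
      · exact h1
    have hab : a = b := Fin.ext (by omega)
    subst hab
    have hp : p = r.reverse.concat h'.symm := by
      have := congrArg SimpleGraph.Walk.reverse hrb
      rwa [SimpleGraph.Walk.reverse_reverse, SimpleGraph.Walk.reverse_cons] at this
    have hnd : p.support.Nodup := by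
      have := hd.support_nodup
      rwa [SimpleGraph.Walk.support_cons] at this
    cases r with
    | nil =>
      have hlen := hd.three_le_length
      have : p.length = 1 := by rw [hp]; simp
      simp [this] at hlen
    | cons h2 r2 =>
      have hnotnil : ¬ (SimpleGraph.Walk.cons h2 r2).reverse.Nil := by
        rw [SimpleGraph.Walk.nil_iff_length_eq, SimpleGraph.Walk.length_reverse]
        simp
      have hnn := closed_walk_support_not_nodup _ hnotnil
      apply hnn
      have : p.support = (SimpleGraph.Walk.cons h2 r2).reverse.support.concat m := by
        rw [hp, SimpleGraph.Walk.support_concat, List.concat_eq_append]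
      rw [this, List.concat_eq_append] at hnd
      exact (List.nodup_append'.mp hnd).1

lemma pathG_acyclic (n : ℕ) : (pathG n).IsAcyclic := by
  intro v c hc
  classical
  have hsupp : c.support.toFinset.Nonempty := ⟨v, List.mem_toFinset.mpr c.start_mem_support⟩
  obtain ⟨m, hm, hmax⟩ := c.support.toFinset.exists_max_image (fun x => x.val) hsupp
  have hm' : m ∈ c.support := List.mem_toFinset.mp hm
  refine path_no_cycle_at_max (c.rotate m hm') (hc.rotate hm') ?_
  intro x hx
  apply hmax
  rw [List.mem_toFinset]
  rcases List.eq_or_mem_of_mem_cons (by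
      rw [← SimpleGraph.Walk.support_eq_cons]; exact hx) with h1 | h1
  · rw [h1]; exact hm'
  · have := (SimpleGraph.Walk.support_rotate c m hm').mem_iff.mp h1
    exact List.mem_of_mem_tail this

lemma star_no_cycle_at_center {n : ℕ} {z : Fin n} (hz : z.val = 0)
    (d : (starG n).Walk z z) (hd : d.IsCycle) : False := by
  cases d with
  | nil => simpa using hd.three_le_length
  | @cons _ a _ h p =>
    have ha : a.val ≠ 0 := by
      intro h0
      exact (starG_adj.mp h).1 (Fin.ext (by omega))
    cases p with
    | nil => simpa using hd.three_le_length
    | @cons _ b _ h2 q =>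
      have hb : b = z := by
        have := (starG_adj.mp h2).2
        refine Fin.ext ?_
        omega
      subst hb
      cases q with
      | nil => simpa using hd.three_le_length
      | cons h3 q2 =>
        have hnotnil : ¬ (SimpleGraph.Walk.cons h3 q2).Nil := by simp
        have hnn := closed_walk_support_not_nodup _ hnotnil
        apply hnn
        have hnd := hd.support_nodup
        simp only [SimpleGraph.Walk.support_cons, List.tail_cons] at hnd
        exact (List.nodup_cons.mp hnd).2

lemma starG_acyclic (n : ℕ) : (starG n).IsAcyclic := by
  intro v c hc
  by_cases hv : v.val = 0
  · exact star_no_cycle_at_center hv c hc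
  · cases c with
    | nil => simpa using hc.three_le_length
    | @cons _ a _ h p =>
      have ha : a.val = 0 := by
        have := (starG_adj.mp h).2
        omega
      have hmem : a ∈ (SimpleGraph.Walk.cons h p).support := by simp
      exact star_no_cycle_at_center ha _ (hc.rotate hmem)

lemma subtree_eq_induce {V : Type*} {G : SimpleGraph V} (hG : G.IsAcyclic) {H : G.Subgraph}
    (hH : IsSubtree H) : H = (⊤ : G.Subgraph).induce H.verts := by
  refine Subgraph.ext (by simp) ?_
  ext u v
  simp only [Subgraph.induce_adj, Subgraph.top_adj]
  constructor
  · intro h; exact ⟨H.edge_vert h, H.edge_vert h.symm, H.adj_sub h⟩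
  · rintro ⟨hu, hv, hadj⟩
    classical
    obtain ⟨w⟩ := hH.1.preconnected ⟨u, hu⟩ ⟨v, hv⟩
    have hp : (w.toPath.val.map H.hom).IsPath :=
      SimpleGraph.Walk.map_isPath_of_injective Subgraph.hom_injective w.toPath.prop
    have hq : (SimpleGraph.Walk.cons hadj SimpleGraph.Walk.nil).IsPath := by
      simp [hadj.ne]
    have heq := isAcyclic_iff_path_unique.mp hG (⟨_, hq⟩ : G.Path u v) ⟨_, hp⟩
    have hmem : s(u, v) ∈ (w.toPath.val.map H.hom).edges := by
      have h2 := congrArg (fun p : G.Path u v => p.val.edges) heq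
      simp only at h2
      have h3 : s(u, v) ∈ (SimpleGraph.Walk.cons hadj SimpleGraph.Walk.nil).edges := by simp
      exact cast (congrArg (s(u, v) ∈ ·) h2) h3
    rw [SimpleGraph.Walk.edges_map] at hmem
    obtain ⟨e, he, hmape⟩ := List.mem_map.mp hmem
    induction e using Sym2.ind with
    | _ a b =>
      have hadj' : H.Adj ↑a ↑b := SimpleGraph.Walk.adj_of_mem_edges _ he
      rw [Sym2.map_pair_eq, Sym2.eq_iff] at hmape
      rcases hmape with ⟨h1, h2⟩ | ⟨h1, h2⟩
      · rw [← h1, ← h2]; exact hadj'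
      · rw [← h1, ← h2]; exact hadj'.symm


lemma induce_singleton_connected {V : Type*} (G : SimpleGraph V) (v : V) :
    (G.induce {v}).Connected := by
  have hne : Nonempty ↥({v} : Set V) := ⟨⟨v, rfl⟩⟩
  refine ⟨fun a b => ?_⟩
  have : a = b := Subtype.ext (by
    have ha := a.2; have hb := b.2
    simp only [Set.mem_singleton_iff] at ha hb
    rw [ha, hb])
  rw [this]

lemma induce_insert_connected {V : Type*} {G : SimpleGraph V} {s : Set V} {x y : V}
    (hs : (G.induce s).Connected) (hy : y ∈ s) (hadj : G.Adj y x) :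
    (G.induce (insert x s)).Connected := by
  have h2 : (G.induce {x}).Connected := induce_singleton_connected G x
  have h3 := connected_induce_union hs.preconnected h2.preconnected hy rfl hadj
  rwa [Set.union_singleton] at h3

lemma exists_crossing_edge {V : Type*} {G : SimpleGraph V} {P s : Set V}
    (hP : (G.induce P).Connected) (hsP : s ⊆ P) {y z : V} (hy : y ∈ s) (hz : z ∈ P)
    (hzs : z ∉ s) :
    ∃ x, (x ∈ P ∧ x ∉ s) ∧ ∃ w ∈ s, G.Adj w x := by
  obtain ⟨walkw⟩ := hP.preconnected ⟨y, hsP hy⟩ ⟨z, hz⟩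
  obtain ⟨a, b, hab, hpa, hpb⟩ := walk_cross (fun t : ↥P => ↑t ∈ s) walkw hy hzs
  exact ⟨↑b, ⟨b.2, hpb⟩, ↑a, hpa, by simpa using hab⟩

lemma grow_connected {V : Type*} [Finite V] {G : SimpleGraph V} {P : Set V}
    (hP : (G.induce P).Connected) :
    ∀ (j : ℕ), j ≤ P.ncard → ∀ s : Set V, s ⊆ P → s.Nonempty → (G.induce s).Connected →
      s.ncard ≤ j → ∃ t : Set V, s ⊆ t ∧ t ⊆ P ∧ (G.induce t).Connected ∧ t.ncard = j := by
  intro j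
  induction j with
  | zero =>
    intro _ s _ hne _ hle
    have := (Set.ncard_pos (Set.toFinite s)).mpr hne
    omega
  | succ j ih =>
    intro hj s hsP hne hconn hle
    by_cases hcase : s.ncard = j + 1
    · exact ⟨s, subset_rfl, hsP, hconn, hcase⟩
    · have hle' : s.ncard ≤ j := by omega
      obtain ⟨t, h1, h2, h3, h4⟩ := ih (by omega) s hsP hne hconn hle'
      obtain ⟨z, hzP, hzt⟩ := Set.exists_mem_notMem_of_ncard_lt_ncard
        (show t.ncard < P.ncard by omega) (Set.toFinite t)
      obtain ⟨y, hyt⟩ := hne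
      obtain ⟨x, ⟨hxP, hxt⟩, w, hwt, hadj⟩ := exists_crossing_edge hP h2 (h1 hyt) hzP hzt
      refine ⟨insert x t, ?_, ?_, induce_insert_connected h3 hwt hadj, ?_⟩
      · exact h1.trans (Set.subset_insert x t)
      · exact Set.insert_subset hxP h2
      · rw [Set.ncard_insert_of_notMem hxt (Set.toFinite t), h4]

lemma conn_lower {n k : ℕ} {G : SimpleGraph (Fin n)} (hG : G.IsTree) (hk1 : 1 ≤ k)
    (hkn : k ≤ n) : n - k + 1 ≤ nk G k := by
  have hn : 0 < n := by omega
  classical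
  set f : Fin n → ℕ := fun i => G.dist ⟨0, hn⟩ i with hf
  set σ := Tuple.sort f with hσ
  have hmono : Monotone (f ∘ σ) := Tuple.monotone_sort f
  set P : ℕ → Set (Fin n) := fun j => {x | (σ.symm x : Fin n).val ≤ j} with hP
  have hPcard : ∀ j, j < n → (P j).ncard = j + 1 := by
    intro j hj
    have hPj : P j = ↑((Finset.Iic (⟨j, hj⟩ : Fin n)).image σ) := by
      ext x
      simp only [hP, Set.mem_setOf_eq, Finset.coe_image, Set.mem_image, Finset.mem_coe,
        Finset.mem_Iic]
      constructor
      · intro hx; exact ⟨σ.symm x, by rw [Fin.le_def]; exact hx, by simp⟩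
      · rintro ⟨i, hi, rfl⟩
        rw [Fin.le_def] at hi
        simpa using hi
    rw [hPj, Set.ncard_coe_finset, Finset.card_image_of_injective _ σ.injective, Fin.card_Iic]
  have hσ0 : σ ⟨0, hn⟩ = ⟨0, hn⟩ := by
    have h1 : f (σ ⟨0, hn⟩) ≤ f (σ (σ.symm ⟨0, hn⟩)) :=
      hmono (by rw [Fin.le_def]; exact Nat.zero_le _)
    rw [Equiv.apply_symm_apply] at h1
    have h2 : f (⟨0, hn⟩ : Fin n) = 0 := by simp [hf, SimpleGraph.dist_self]
    rw [h2, Nat.le_zero] at h1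
    exact ((hG.isConnected.dist_eq_zero_iff).mp h1).symm
  have hPconn : ∀ j, j < n → (G.induce (P j)).Connected := by
    intro j
    induction j with
    | zero =>
      intro hj
      have hP0 : P 0 = {σ ⟨0, hn⟩} := by
        ext x
        simp only [hP, Set.mem_setOf_eq, Set.mem_singleton_iff, Nat.le_zero]
        constructor
        · intro hx
          have : σ.symm x = ⟨0, hn⟩ := Fin.ext hx
          rw [← this, Equiv.apply_symm_apply]
        · rintro rfl; simp
      rw [hP0]
      exact induce_singleton_connected G _
    | succ j ihj =>
      intro hj
      have hconnj := ihj (by omega)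
      have hPsucc : P (j + 1) = insert (σ ⟨j + 1, hj⟩) (P j) := by
        ext x
        simp only [hP, Set.mem_insert_iff, Set.mem_setOf_eq]
        constructor
        · intro hx
          rcases Nat.lt_or_ge (σ.symm x : Fin n).val (j + 1) with h1 | h1
          · right; omega
          · left
            have hx2 : σ.symm x = ⟨j + 1, hj⟩ :=
              Fin.ext (show (σ.symm x : Fin n).val = j + 1 by omega)
            rw [← hx2, Equiv.apply_symm_apply]
        · rintro (rfl | hx)
          · simp
          · omega
      rw [hPsucc]
      by_cases hd0 : G.dist ⟨0, hn⟩ (σ ⟨j + 1, hj⟩) = 0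
      · exfalso
        have h1 : (⟨0, hn⟩ : Fin n) = σ ⟨j + 1, hj⟩ := (hG.isConnected.dist_eq_zero_iff).mp hd0
        rw [← hσ0] at h1
        have := σ.injective h1
        simp at this
      · obtain ⟨w, hw⟩ := SimpleGraph.exists_walk_of_dist_ne_zero hd0
        have hne : (⟨0, hn⟩ : Fin n) ≠ σ ⟨j + 1, hj⟩ := by
          intro hh; rw [hh] at hd0; simp [SimpleGraph.dist_self] at hd0
        obtain ⟨u, hadj, r, hrw⟩ := SimpleGraph.Walk.exists_eq_cons_of_ne (Ne.symm hne) w.reverse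
        have hdu : G.dist ⟨0, hn⟩ u < G.dist ⟨0, hn⟩ (σ ⟨j + 1, hj⟩) := by
          have h1 : r.length = w.length - 1 := by
            have h2 := congrArg SimpleGraph.Walk.length hrw
            rw [SimpleGraph.Walk.length_reverse, SimpleGraph.Walk.length_cons] at h2
            omega
          have h2 : G.dist ⟨0, hn⟩ u ≤ r.reverse.length := SimpleGraph.dist_le r.reverse
          rw [SimpleGraph.Walk.length_reverse] at h2
          omega
        have hidx : (σ.symm u : Fin n).val ≤ j := by
          by_contra hc
          push_neg at hc
          have h1 : f (σ ⟨j + 1, hj⟩) ≤ f (σ (σ.symm u)) :=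
            hmono (by rw [Fin.le_def]; exact hc)
          rw [Equiv.apply_symm_apply] at h1
          simp only [hf] at h1
          omega
        exact induce_insert_connected hconnj (show u ∈ P j from hidx) hadj.symm
  have key : ∀ (j : ℕ) (hj : j < n), k - 1 ≤ j → ∃ t : Set (Fin n),
      σ ⟨j, hj⟩ ∈ t ∧ t ⊆ P j ∧ (G.induce t).Connected ∧ t.ncard = k := by
    intro j hj hkj
    have hmem : σ ⟨j, hj⟩ ∈ P j := by simp [hP]
    obtain ⟨t, h1, h2, h3, h4⟩ := grow_connected (hPconn j hj) k
      (by rw [hPcard j hj]; omega) {σ ⟨j, hj⟩} (Set.singleton_subset_iff.mpr hmem)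
      (Set.singleton_nonempty _) (induce_singleton_connected G _)
      (by rw [Set.ncard_singleton]; omega)
    exact ⟨t, h1 rfl, h2, h3, h4⟩
  choose t ht1 ht2 ht3 ht4 using key
  have hjlt : ∀ i : Fin (n - k + 1), i.val + k - 1 < n := fun i => by
    have := i.2; omega
  have hjge : ∀ i : Fin (n - k + 1), k - 1 ≤ i.val + k - 1 := fun i => by omega
  set F : Fin (n - k + 1) → {H : G.Subgraph // IsSubtree H ∧ H.verts.ncard = k} :=
    fun i => ⟨(⊤ : G.Subgraph).induce (t _ (hjlt i) (hjge i)),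
      ⟨connected_induce_iff.mp (ht3 _ (hjlt i) (hjge i)), coe_acyclic hG.IsAcyclic _⟩,
      by simpa using ht4 _ (hjlt i) (hjge i)⟩ with hF
  have hFinj : Function.Injective F := by
    intro i1 i2 h
    have hteq : t _ (hjlt i1) (hjge i1) = t _ (hjlt i2) (hjge i2) := by
      have h2 := congrArg (fun X : {H : G.Subgraph // IsSubtree H ∧ H.verts.ncard = k} =>
        X.1.verts) h
      simpa [hF] using h2
    have hle12 : ∀ (a b : Fin (n - k + 1)),
        t _ (hjlt a) (hjge a) = t _ (hjlt b) (hjge b) → a.val ≤ b.val := by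
      intro a b hab
      have hmem2 : σ ⟨a.val + k - 1, hjlt a⟩ ∈ P (b.val + k - 1) :=
        ht2 _ (hjlt b) (hjge b) (hab ▸ ht1 _ (hjlt a) (hjge a))
      simp only [hP, Set.mem_setOf_eq, Equiv.symm_apply_apply] at hmem2
      omega
    exact Fin.ext (le_antisymm (hle12 i1 i2 hteq) (hle12 i2 i1 hteq.symm))
  calc n - k + 1 = Nat.card (Fin (n - k + 1)) := by simp
    _ ≤ nk G k := Nat.card_le_card_of_injective F hFinj


lemma path_walk_ivt {n : ℕ} {H : (pathG n).Subgraph} :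
    ∀ {a b : H.verts} (w : H.coe.Walk a b) (c : ℕ),
      (a : Fin n).val ≤ c → c ≤ (b : Fin n).val → ∃ x ∈ H.verts, (x : Fin n).val = c := by
  intro a b w
  induction w with
  | @nil u => intro c h1 h2; exact ⟨u, u.2, le_antisymm h1 h2⟩
  | @cons a d b h w ih =>
    intro c h1 h2
    rcases eq_or_lt_of_le h1 with he | hlt
    · exact ⟨↑a, a.2, he⟩
    · apply ih _ _ h2
      have h3 := pathG_adj.mp (H.coe_adj_sub _ _ h)
      have hlt' : (a : Fin n).val < c := hlt
      have h4 : ((d : Fin n)).val = (a : Fin n).val + 1 ∨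
          (a : Fin n).val = ((d : Fin n)).val + 1 := h3.2
      show ((d : Fin n)).val ≤ c
      omega

lemma path_upper {n k : ℕ} : nk (pathG n) k ≤ n - k + 1 := by
  classical
  have hmm : ∀ X : {H : (pathG n).Subgraph // IsSubtree H ∧ H.verts.ncard = k},
      ∃ m M : Fin n,
      X.1.verts = {x : Fin n | m.val ≤ x.val ∧ x.val ≤ M.val} ∧ M.val + 1 - m.val = k ∧
      m.val ≤ M.val := by
    rintro ⟨H, hH, hcard⟩
    have hne : H.verts.Nonempty := hH.1.nonempty
    obtain ⟨m, hm, hmin⟩ := Set.exists_min_image H.verts (fun x => x.val)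
      (Set.toFinite _) hne
    obtain ⟨M, hM, hmax⟩ := Set.exists_max_image H.verts (fun x => x.val)
      (Set.toFinite _) hne
    have hIsub : H.verts = {x : Fin n | m.val ≤ x.val ∧ x.val ≤ M.val} := by
      apply Set.Subset.antisymm
      · intro x hx; exact ⟨hmin x hx, hmax x hx⟩
      · rintro x ⟨hx1, hx2⟩
        obtain ⟨w⟩ := hH.1.preconnected ⟨m, hm⟩ ⟨M, hM⟩
        obtain ⟨y, hy, hyval⟩ := path_walk_ivt w x.val hx1 hx2
        have : y = x := Fin.ext hyval
        rwa [← this]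
    have hIcard : M.val + 1 - m.val = k := by
      have hIfin : {x : Fin n | m.val ≤ x.val ∧ x.val ≤ M.val} = ↑(Finset.Icc m M) := by
        ext x
        simp only [Set.mem_setOf_eq, Finset.coe_Icc, Set.mem_Icc, Fin.le_def]
      rw [← hcard, hIsub, hIfin, Set.ncard_coe_finset, Fin.card_Icc]
    exact ⟨m, M, hIsub, hIcard, hmin M hM⟩
  choose m M hverts hcard hle using hmm
  have hlt2 : ∀ X, (m X).val < n - k + 1 := by
    intro X
    have h1 := hcard X
    have h2 := hle X
    have h3 : (M X).val < n := (M X).isLt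
    omega
  set F : {H : (pathG n).Subgraph // IsSubtree H ∧ H.verts.ncard = k} → Fin (n - k + 1) :=
    fun X => ⟨(m X).val, hlt2 X⟩ with hF
  have hFinj : Function.Injective F := by
    intro X Y h
    have hmval : (m X).val = (m Y).val :=
      congrArg (fun z : Fin (n - k + 1) => z.val) h
    have hMval : (M X).val = (M Y).val := by
      have h1 := hcard X; have h2 := hcard Y
      have h3 := hle X; have h4 := hle Y
      omega
    have hveq : X.1.verts = Y.1.verts := by
      rw [hverts X, hverts Y, hmval, hMval]
    apply Subtype.ext
    rw [subtree_eq_induce (pathG_acyclic n) X.2.1, subtree_eq_induce (pathG_acyclic n) Y.2.1,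
      hveq]
  have hcardle : Nat.card {H : (pathG n).Subgraph // IsSubtree H ∧ H.verts.ncard = k} ≤
      Nat.card (Fin (n - k + 1)) := Nat.card_le_card_of_injective F hFinj
  simpa [nk] using hcardle


lemma subtree_edgeSet_ncard {V : Type*} [Fintype V] {G : SimpleGraph V} {H : G.Subgraph}
    (hH : IsSubtree H) : H.edgeSet.ncard = H.verts.ncard - 1 := by
  classical
  have htree : H.coe.IsTree := ⟨hH.1, hH.2⟩
  letI : Fintype H.verts := Fintype.ofFinite _
  letI : Fintype H.coe.edgeSet := Fintype.ofFinite _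
  have hcard := htree.card_edgeFinset
  have h1 : H.edgeSet = Sym2.map (↑) '' H.coe.edgeSet := (H.image_coe_edgeSet_coe).symm
  have h2 : H.edgeSet.ncard = H.coe.edgeSet.ncard := by
    rw [h1, Set.ncard_image_of_injective _ (Sym2.map.injective Subtype.val_injective)]
  have h3 : H.coe.edgeSet.ncard = H.coe.edgeFinset.card := by
    rw [← Set.ncard_coe_finset, SimpleGraph.coe_edgeFinset]
  have h4 : H.verts.ncard = Fintype.card H.verts := by
    rw [← Nat.card_coe_set_eq, Nat.card_eq_fintype_card]
  rw [h2, h3, h4]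
  omega

lemma subtree_verts_eq_support {V : Type*} {G : SimpleGraph V} {H : G.Subgraph}
    (hH : IsSubtree H) (h2 : 2 ≤ H.verts.ncard) : H.verts = {v | ∃ w, H.Adj v w} := by
  ext v
  constructor
  · intro hv
    obtain ⟨u, hu, hne⟩ : ∃ u ∈ H.verts, u ≠ v := by
      by_contra hcon
      push_neg at hcon
      have hsub : H.verts ⊆ {v} := fun u hu => hcon u hu
      have hle := Set.ncard_le_ncard hsub (Set.toFinite _)
      rw [Set.ncard_singleton] at hle
      omega
    obtain ⟨w⟩ := hH.1.preconnected ⟨v, hv⟩ ⟨u, hu⟩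
    have hne' : (⟨v, hv⟩ : H.verts) ≠ ⟨u, hu⟩ := by
      intro hh
      exact hne (congrArg Subtype.val hh).symm
    obtain ⟨d, h, p, rfl⟩ := w.exists_eq_cons_of_ne hne'
    exact ⟨↑d, by simpa using h⟩
  · rintro ⟨w, hw⟩
    exact H.edge_vert hw

lemma subtree_eq_of_edgeSet_eq {V : Type*} {G : SimpleGraph V} {H K : G.Subgraph}
    (hH : IsSubtree H) (hK : IsSubtree K) (h2 : 2 ≤ H.verts.ncard) (h2' : 2 ≤ K.verts.ncard)
    (hE : H.edgeSet = K.edgeSet) : H = K := by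
  have hAdj : H.Adj = K.Adj := by
    ext u v
    rw [← Subgraph.mem_edgeSet, ← Subgraph.mem_edgeSet, hE]
  refine Subgraph.ext ?_ hAdj
  rw [subtree_verts_eq_support hH h2, subtree_verts_eq_support hK h2', hAdj]

lemma tree_nk_upper {n k : ℕ} {G : SimpleGraph (Fin n)} (hG : G.IsTree) (hk : 2 ≤ k) :
    nk G k ≤ (n - 1).choose (k - 1) := by
  classical
  letI : Fintype G.edgeSet := Fintype.ofFinite _
  have hmem : ∀ X : {H : G.Subgraph // IsSubtree H ∧ H.verts.ncard = k},
      (X.1.edgeSet.toFinite).toFinset ∈ Finset.powersetCard (k - 1) G.edgeFinset := by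
    intro X
    rw [Finset.mem_powersetCard]
    constructor
    · intro e he
      rw [Set.Finite.mem_toFinset] at he
      rw [SimpleGraph.mem_edgeFinset]
      exact X.1.edgeSet_subset he
    · rw [← Set.ncard_eq_toFinset_card _ (X.1.edgeSet.toFinite), subtree_edgeSet_ncard X.2.1,
        X.2.2]
  set F : {H : G.Subgraph // IsSubtree H ∧ H.verts.ncard = k} →
      {t : Finset (Sym2 (Fin n)) // t ∈ Finset.powersetCard (k - 1) G.edgeFinset} :=
    fun X => ⟨_, hmem X⟩ with hF
  have hFinj : Function.Injective F := by
    intro X Y h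
    have hE : X.1.edgeSet = Y.1.edgeSet := by
      have h2 := congrArg (fun t : {t : Finset (Sym2 (Fin n)) //
        t ∈ Finset.powersetCard (k - 1) G.edgeFinset} => (t.1 : Set (Sym2 (Fin n)))) h
      simpa [hF, Set.Finite.coe_toFinset] using h2
    exact Subtype.ext (subtree_eq_of_edgeSet_eq X.2.1 Y.2.1 (by rw [X.2.2]; omega)
      (by rw [Y.2.2]; omega) hE)
  have hle := Nat.card_le_card_of_injective F hFinj
  have htarget : Nat.card {t : Finset (Sym2 (Fin n)) //
      t ∈ Finset.powersetCard (k - 1) G.edgeFinset} = (n - 1).choose (k - 1) := by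
    have h5 := hG.card_edgeFinset
    rw [Fintype.card_fin] at h5
    rw [Nat.card_eq_fintype_card, Fintype.card_coe, Finset.card_powersetCard]
    congr 1
    omega
  rw [nk]
  rw [htarget] at hle
  exact hle

lemma star_lower {n k : ℕ} (hn : 0 < n) (hk : 1 ≤ k) :
    (n - 1).choose (k - 1) ≤ nk (starG n) k := by
  classical
  set z : Fin n := ⟨0, hn⟩ with hz
  set D := Finset.powersetCard (k - 1) (Finset.univ.erase z) with hD
  have hznotmem : ∀ t ∈ D, z ∉ (t : Set (Fin n)) := by
    intro t ht hzt
    rw [hD, Finset.mem_powersetCard] at ht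
    have := ht.1 hzt
    simp at this
  have hconn : ∀ t ∈ D, (starG n).induce (insert z (t : Set (Fin n))) |>.Connected := by
    intro t ht
    apply induce_connected_of_patches z (Set.mem_insert _ _)
    intro v hv
    rcases eq_or_ne v z with rfl | hne
    · exact ⟨{z}, Set.singleton_subset_iff.mpr (Set.mem_insert _ _), rfl, rfl,
        Reachable.refl _⟩
    · have hadj : (starG n).Adj z v := starG_adj.mpr ⟨hne.symm, Or.inl rfl⟩
      refine ⟨{z, v}, ?_, by simp, by simp, ?_⟩
      · intro x hx
        rcases hx with rfl | hx
        · exact Set.mem_insert _ _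
        · simp only [Set.mem_singleton_iff] at hx
          subst hx
          exact hv
      · exact (induce_pair_connected_of_adj hadj).preconnected _ _
  have hsub : ∀ t ∈ D, IsSubtree ((⊤ : (starG n).Subgraph).induce (insert z ↑t)) ∧
      ((⊤ : (starG n).Subgraph).induce (insert z (t : Set (Fin n)))).verts.ncard = k := by
    intro t ht
    refine ⟨⟨connected_induce_iff.mp (hconn t ht), coe_acyclic (starG_acyclic n) _⟩, ?_⟩
    have hcard : (t : Set (Fin n)).ncard = k - 1 := by
      rw [Set.ncard_coe_finset]
      rw [hD, Finset.mem_powersetCard] at ht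
      exact ht.2
    have : ((⊤ : (starG n).Subgraph).induce (insert z (t : Set (Fin n)))).verts
        = insert z (t : Set (Fin n)) := rfl
    rw [this, Set.ncard_insert_of_notMem (hznotmem t ht) (Set.toFinite _), hcard]
    omega
  set F : {t // t ∈ D} → {H : (starG n).Subgraph // IsSubtree H ∧ H.verts.ncard = k} :=
    fun t => ⟨_, hsub t.1 t.2⟩ with hF
  have hFinj : Function.Injective F := by
    intro t1 t2 h
    have hverts : insert z (t1.1 : Set (Fin n)) = insert z (t2.1 : Set (Fin n)) := by
      have h2 := congrArg (fun X : {H : (starG n).Subgraph //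
        IsSubtree H ∧ H.verts.ncard = k} => X.1.verts) h
      simpa [hF] using h2
    apply Subtype.ext
    apply Finset.coe_injective
    ext x
    constructor
    · intro hx
      have hxne : x ≠ z := fun hh => hznotmem t1.1 t1.2 (hh ▸ hx)
      have : x ∈ insert z (t2.1 : Set (Fin n)) := hverts ▸ Set.mem_insert_iff.mpr (Or.inr hx)
      rcases this with h' | h'
      · exact absurd h' hxne
      · exact h'
    · intro hx
      have hxne : x ≠ z := fun hh => hznotmem t2.1 t2.2 (hh ▸ hx)
      have : x ∈ insert z (t1.1 : Set (Fin n)) := hverts ▸ Set.mem_insert_iff.mpr (Or.inr hx)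
      rcases this with h' | h'
      · exact absurd h' hxne
      · exact h'
  have hle := Nat.card_le_card_of_injective F hFinj
  have hdom : Nat.card {t // t ∈ D} = (n - 1).choose (k - 1) := by
    rw [Nat.card_eq_fintype_card, Fintype.card_coe, hD, Finset.card_powersetCard,
      Finset.card_erase_of_mem (Finset.mem_univ z), Finset.card_univ, Fintype.card_fin]
  rw [nk]
  rw [hdom] at hle
  exact hle

end Aux

/-- among `n`-vertex trees, the star maximizes and the path minimizes the
number of `k`-vertex subtrees: `n_k(S_n) ≥ n_k(T) ≥ n_k(P_n)` for every `k ≥ 0`. -/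
theorem nk_tree_extremal (n : ℕ) (T : SimpleGraph (Fin n)) (hT : T.IsTree) (k : ℕ) :
    nk (pathG n) k ≤ nk T k ∧ nk T k ≤ nk (starG n) k := by
  have hn : 0 < n := by
    have h1 := hT.isConnected.nonempty
    obtain ⟨v⟩ := h1
    exact v.pos
  constructor
  · rcases Nat.eq_zero_or_pos k with rfl | hk1
    · rw [nk_zero, nk_zero]
    by_cases hkn : k ≤ n
    · exact path_upper.trans (conn_lower hT hk1 hkn)
    · rw [nk_gt _ (by omega)]
      exact Nat.zero_le _
  · rcases Nat.eq_zero_or_pos k with rfl | hk1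
    · rw [nk_zero, nk_zero]
    rcases eq_or_lt_of_le (show 1 ≤ k from hk1) with h1 | hk2
    · rw [← h1, nk_one, nk_one]
    · by_cases hkn : k ≤ n
      · exact (tree_nk_upper hT hk2).trans (star_lower hn hk1)
      · rw [nk_gt _ (by omega)]
        exact Nat.zero_le _
end

section
/- The Wiener index of the graph H_1 = U_{4,4}(1;1) equals 118, which is strictly less than 120, the Wiener index of U_1(4,4,1,1). Hence the graph maximizing the number of subtrees among unicyclic graphs with segment sequence (4,4,1,1) does not minimize the Wiener index. -/
open SimpleGraph

/-- `H₁ = U_{4,4}(1;1)` : the cycle `C_8` (on `0,…,7`) with a pendant vertex `8`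
attached to `0` and a pendant vertex `9` attached to the antipodal vertex `4`. -/
def H₁ : SimpleGraph (Fin 10) :=
  SimpleGraph.fromRel (fun u v =>
    (v.val = u.val + 1 ∧ v.val ≤ 7) ∨ (u.val = 0 ∧ v.val = 7) ∨
    (u.val = 0 ∧ v.val = 8) ∨ (u.val = 4 ∧ v.val = 9))

/-- `U_1(4,4,1,1)` : the cycle `C_4` (on `0,…,3`) with a pendant path of length `4`
(`0-4-5-6-7`) and two pendant vertices `8`, `9`, all attached at the vertex `0`. -/
def U₁4411 : SimpleGraph (Fin 10) :=
  SimpleGraph.fromRel (fun u v =>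
    (v.val = u.val + 1 ∧ v.val ≤ 3) ∨ (u.val = 0 ∧ v.val = 3) ∨
    (u.val = 0 ∧ v.val = 4) ∨ (v.val = u.val + 1 ∧ 5 ≤ v.val ∧ v.val ≤ 7) ∨
    (u.val = 0 ∧ (v.val = 8 ∨ v.val = 9)))



section Bfs

variable {V : Type*} [Fintype V] [DecidableEq V] (G : SimpleGraph V) [DecidableRel G.Adj]

/-- BFS ball: vertices reachable from `u` (going backwards) within `k` steps. -/
def ball (u : V) : ℕ → Finset V
  | 0 => {u}
  | (k+1) => (ball u k).biUnion (fun w => insert w (G.neighborFinset w))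

lemma mem_ball {u : V} : ∀ {k : ℕ} {v : V},
    v ∈ _root_.ball G u k ↔ ∃ p : G.Walk v u, p.length ≤ k := by
  intro k
  induction k with
  | zero =>
    intro v
    simp only [_root_.ball, Finset.mem_singleton]
    constructor
    · rintro rfl; exact ⟨SimpleGraph.Walk.nil, le_refl _⟩
    · rintro ⟨p, hp⟩
      exact (SimpleGraph.Walk.eq_of_length_eq_zero (Nat.le_zero.mp hp))
  | succ k ih =>
    intro v
    simp only [_root_.ball, Finset.mem_biUnion, Finset.mem_insert]
    constructor
    · rintro ⟨w, hw, (rfl | hv)⟩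
      · obtain ⟨p, hp⟩ := ih.mp hw
        exact ⟨p, hp.trans (Nat.le_succ k)⟩
      · obtain ⟨p, hp⟩ := ih.mp hw
        refine ⟨SimpleGraph.Walk.cons ((G.mem_neighborFinset w v).mp hv).symm p, ?_⟩
        simpa using Nat.succ_le_succ hp
    · rintro ⟨p, hp⟩
      cases p with
      | nil => exact ⟨u, ih.mpr ⟨SimpleGraph.Walk.nil, Nat.zero_le _⟩, Or.inl rfl⟩
      | cons h q =>
        refine ⟨_, ih.mpr ⟨q, ?_⟩, Or.inr ((G.mem_neighborFinset _ _).mpr h.symm)⟩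
        simpa using Nat.succ_le_succ_iff.mp hp

/-- computable distance via BFS balls. -/
def bdist (n : ℕ) (u v : V) : ℕ :=
  ((Finset.range n).filter (fun k => v ∉ _root_.ball G u k)).card

lemma dist_eq_bdist {n : ℕ} {u v : V} (h : v ∈ _root_.ball G u n) :
    G.dist u v = bdist G n u v := by
  obtain ⟨p, hp⟩ := (mem_ball G).mp h
  have hr : G.Reachable u v := ⟨p.reverse⟩
  obtain ⟨q, hq⟩ := hr.exists_walk_length_eq_dist
  have key : ∀ k, v ∈ _root_.ball G u k ↔ G.dist u v ≤ k := by
    intro k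
    constructor
    · intro hk
      obtain ⟨r, hr'⟩ := (mem_ball G).mp hk
      calc G.dist u v ≤ r.reverse.length := SimpleGraph.dist_le _
        _ = r.length := SimpleGraph.Walk.length_reverse _
        _ ≤ k := hr'
    · intro hk
      exact (mem_ball G).mpr ⟨q.reverse, by simpa [hq] using hk⟩
  have hdn : G.dist u v ≤ n := (key n).mp h
  unfold bdist
  have : (Finset.range n).filter (fun k => v ∉ _root_.ball G u k) = Finset.range (G.dist u v) := by
    ext k
    simp only [Finset.mem_filter, Finset.mem_range, key, not_le]
    constructor
    · rintro ⟨_, h2⟩; exact h2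
    · intro hk; exact ⟨lt_of_lt_of_le hk hdn, hk⟩
  rw [this, Finset.card_range]

end Bfs

instance : DecidableRel H₁.Adj :=
  fun u v => decidable_of_iff _ (SimpleGraph.fromRel_adj _ u v).symm

instance : DecidableRel U₁4411.Adj :=
  fun u v => decidable_of_iff _ (SimpleGraph.fromRel_adj _ u v).symm


set_option maxHeartbeats 4000000 in
/-- `W(H₁) = 118 < 120 = W(U_1(4,4,1,1))`. -/
theorem wiener_counterexample :
    wiener H₁ = 118 ∧ wiener U₁4411 = 120 ∧ wiener H₁ < wiener U₁4411 := by
  have hb1 : ∀ u v : Fin 10, v ∈ _root_.ball H₁ u 7 := by decide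
  have hb2 : ∀ u v : Fin 10, v ∈ _root_.ball U₁4411 u 7 := by decide
  have k1 : ∀ u v : Fin 10, H₁.dist u v = bdist H₁ 7 u v :=
    fun u v => dist_eq_bdist H₁ (hb1 u v)
  have k2 : ∀ u v : Fin 10, U₁4411.dist u v = bdist U₁4411 7 u v :=
    fun u v => dist_eq_bdist U₁4411 (hb2 u v)
  have w1 : wiener H₁ = 118 := by
    unfold wiener
    simp only [k1]
    decide
  have w2 : wiener U₁4411 = 120 := by
    unfold wiener
    simp only [k2]
    decide
  exact ⟨w1, w2, by rw [w1, w2]; norm_num⟩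
end
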